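/- Every idempotent transformation e of [1,n] other than the identity is a product of transformations of the form ε_{ij} (i ≠ j), each of which has rank n−1. -/

import Mathlib

/-- The rank `n-1` idempotent `ε_{ij}` of `T_n`: it sends `j` to `i` and fixes all other
points. -/
def eps {n : ℕ} (i j : Fin n) : Fin n → Fin n := fun k => if k = j then i else k

lemma eps_range {n : ℕ} (i j : Fin n) (hij : i ≠ j) :
    Set.range (eps i j) = {j}ᶜ := by
  ext k
  simp only [Set.mem_range, Set.mem_compl_iff, Set.mem_singleton_iff]
  constructor
  · rintro ⟨x, rfl⟩
    unfold eps
    split <;> simp_all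
  · intro hk
    exact ⟨k, by simp [eps, hk]⟩

lemma eps_ncard {n : ℕ} (i j : Fin n) (hij : i ≠ j) :
    (Set.range (eps i j)).ncard = n - 1 := by
  rw [eps_range i j hij]
  rw [Set.ncard_eq_toFinset_card']
  simp [Finset.card_compl]

lemma foldr_eps {n : ℕ} (e : Fin n → Fin n) (he : ∀ k, e (e k) = e k)
    (js : List (Fin n)) (hnf : ∀ j ∈ js, e j ≠ j) (k : Fin n) :
    (js.map (fun j => eps (e j) j)).foldr (· ∘ ·) id k
      = if k ∈ js then e k else k := by
  induction js with
  | nil => simp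
  | cons j t ih =>
    have ih' := ih (fun x hx => hnf x (List.mem_cons_of_mem _ hx))
    simp only [List.map_cons, List.foldr_cons, Function.comp_apply, ih']
    by_cases hkt : k ∈ t
    · have hek : e k ≠ j := by
        intro h
        exact hnf j List.mem_cons_self (h ▸ (he k))
      simp [hkt, eps, hek, List.mem_cons]
    · by_cases hkj : k = j
      · subst hkj
        rw [if_neg hkt, if_pos List.mem_cons_self]
        simp [eps]
      · simp [hkt, hkj, eps, List.mem_cons]

/-- Every non-identity idempotent transformation of `[1,n]` is a product (composite) of
idempotents of the form `ε_{ij}` with `i ≠ j`, each of which has rank `n-1`. -/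
theorem idempotent_is_product_of_eps (n : ℕ) (e : Fin n → Fin n) (he : e ∘ e = e)
    (hid : e ≠ id) :
    ∃ l : List (Fin n → Fin n), l ≠ [] ∧
      (∀ f ∈ l, ∃ i j : Fin n, i ≠ j ∧ f = eps i j ∧ (Set.range (eps i j)).ncard = n - 1) ∧
      e = l.foldr (· ∘ ·) id := by
  have he' : ∀ k, e (e k) = e k := fun k => congrFun he k
  obtain ⟨k0, hk0⟩ : ∃ k, e k ≠ k := by
    by_contra h
    push_neg at h
    exact hid (funext h)
  set js := (Finset.univ.filter (fun j : Fin n => e j ≠ j)).toList with hjs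
  have hmem : ∀ j, j ∈ js ↔ e j ≠ j := by
    intro j; simp [hjs]
  refine ⟨js.map (fun j => eps (e j) j), ?_, ?_, ?_⟩
  · simp only [ne_eq, List.map_eq_nil_iff]
    intro h
    have := (hmem k0).mpr hk0
    simp [h] at this
  · intro f hf
    simp only [List.mem_map] at hf
    obtain ⟨j, hj, rfl⟩ := hf
    have hne : e j ≠ j := (hmem j).mp hj
    exact ⟨e j, j, hne, rfl, eps_ncard _ _ hne⟩
  · funext k
    rw [foldr_eps e he' js (fun j hj => (hmem j).mp hj) k]
    by_cases h : e k = k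
    · simp [hmem, h]
    · simp [hmem, h]
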